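/- arXiv:0811.2137 — 7 statements merged into one kernel-verified Lean document; each statement's English description precedes it below -/
import Mathlib

section
/- Let (a,b,c) ∈ ℝ³ with a²+b²+c² ≠ 0 and let 𝔥(2,1)_{a,b,c} be the Lie algebra with orthonormal basis E₁,…,E₅ and torsion 3-form T = η∧dη = a(e¹∧e²∧e⁵ − e³∧e⁴∧e⁵) + b(e¹∧e³∧e⁵ + e²∧e⁴∧e⁵) + c(e¹∧e⁴∧e⁵ − e²∧e³∧e⁵). Then the torsion connection ∇⁺ parallelizes T: for all X,Y,Z,W ∈ 𝔥(2,1)_{a,b,c}, T(∇⁺_X Y, Z, W) + T(Y, ∇⁺_X Z, W) + T(Y, Z, ∇⁺_X W) = 0 (i.e. ∇⁺T = 0 for the associated left-invariant structure). -/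
noncomputable section
open Real

/-- ℝ⁵, the underlying space of the Lie algebra 𝔥(2,1)_{a,b,c}. -/
abbrev V : Type := Fin 5 → ℝ

/-- The standard (orthonormal) basis vectors E₁,…,E₅ (0-indexed). -/
def E (i : Fin 5) : V := Pi.single i 1

/-- The inner product making E₁,…,E₅ orthonormal. -/
def ip (x y : V) : ℝ := ∑ i, x i * y i

/-- The dual basis 1-forms e¹,…,e⁵ (0-indexed). -/
def e (i : Fin 5) : V → ℝ := fun x => x i

/-- The Lie bracket of 𝔥(2,1)_{a,b,c}: the only nonzero brackets of basis vectors are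
[E₁,E₂] = −aE₅, [E₃,E₄] = aE₅, [E₁,E₃] = −bE₅, [E₂,E₄] = −bE₅, [E₁,E₄] = −cE₅,
[E₂,E₃] = cE₅. -/
def br (a b c : ℝ) (x y : V) : V := fun k =>
  if k = 4 then
    -a * (x 0 * y 1 - x 1 * y 0) + a * (x 2 * y 3 - x 3 * y 2)
      - b * (x 0 * y 2 - x 2 * y 0) - b * (x 1 * y 3 - x 3 * y 1)
      - c * (x 0 * y 3 - x 3 * y 0) + c * (x 1 * y 2 - x 2 * y 1)
  else 0

/-- Chevalley–Eilenberg differential of a 1-form: dα(X,Y) = −α([X,Y]). -/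
def d1 (a b c : ℝ) (α : V → ℝ) : V → V → ℝ := fun x y => -α (br a b c x y)

/-- dη = de⁵, the Chevalley–Eilenberg differential of η = e⁵. -/
def dEta (a b c : ℝ) : V → V → ℝ := d1 a b c (e 4)

/-- Wedge product of two 1-forms. -/
def w11 (α β : V → ℝ) : V → V → ℝ := fun x y => α x * β y - α y * β x

/-- Wedge product of a 1-form and a 2-form. -/
def w12 (α : V → ℝ) (β : V → V → ℝ) : V → V → V → ℝ :=
  fun x y z => α x * β y z - α y * β x z + α z * β x y

/-- Wedge product of two 2-forms. -/
def w22 (α β : V → V → ℝ) : V → V → V → V → ℝ := fun x y z w =>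
  α x y * β z w - α x z * β y w + α x w * β y z
    + α y z * β x w - α y w * β x z + α z w * β x y

/-- The 4-form e¹∧e²∧e³∧e⁴. -/
def e1234 : V → V → V → V → ℝ := w22 (w11 (e 0) (e 1)) (w11 (e 2) (e 3))

/-- The torsion 3-form T = η∧dη. -/
def T3 (a b c : ℝ) : V → V → V → ℝ := w12 (e 4) (dEta a b c)

/-- Chevalley–Eilenberg differential of a 3-form. -/
def d3 (a b c : ℝ) (T : V → V → V → ℝ) : V → V → V → V → ℝ := fun x y z w =>
  -T (br a b c x y) z w + T (br a b c x z) y w - T (br a b c x w) y z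
    - T (br a b c y z) x w + T (br a b c y w) x z - T (br a b c z w) x y

/-- The Levi-Civita (Koszul) connection of the left-invariant metric:
2⟨∇_X Y, Z⟩ = ⟨[X,Y],Z⟩ − ⟨[Y,Z],X⟩ + ⟨[Z,X],Y⟩. -/
def nablaG (a b c : ℝ) (x y : V) : V := fun k =>
  (1 / 2) * (ip (br a b c x y) (E k) - ip (br a b c y (E k)) x + ip (br a b c (E k) x) y)

/-- The torsion connection ∇⁺: ⟨∇⁺_X Y, Z⟩ = ⟨∇_X Y, Z⟩ + ½T(X,Y,Z). -/
def nablaP (a b c : ℝ) (x y : V) : V := fun k =>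
  nablaG a b c x y k + (1 / 2) * T3 a b c x y (E k)

/-- Connection 1-forms ωⁱⱼ(X) = ⟨D_X E_j, E_i⟩ of a connection D. -/
def conn1 (D : V → V → V) (i j : Fin 5) : V → ℝ := fun x => ip (D x (E j)) (E i)

/-- Curvature 2-forms Ωⁱⱼ = dσⁱⱼ + Σ_k σⁱ_k ∧ σᵏⱼ of connection 1-forms σ. -/
def curv (a b c : ℝ) (σ : Fin 5 → Fin 5 → V → ℝ) (i j : Fin 5) : V → V → ℝ :=
  fun x y => d1 a b c (σ i j) x y + ∑ k, (σ i k x * σ k j y - σ i k y * σ k j x)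

/-- First Pontrjagin 4-form p₁ = (1/8π²) Σ_{1≤i<j≤5} Ωⁱⱼ∧Ωⁱⱼ. -/
def pont (Ω : Fin 5 → Fin 5 → V → V → ℝ) : V → V → V → V → ℝ := fun x y z w =>
  (1 / (8 * π ^ 2)) * ∑ i, ∑ j, if i < j then w22 (Ω i j) (Ω i j) x y z w else 0

/-- The endomorphism ψ: ψE₁ = −E₂, ψE₂ = E₁, ψE₃ = −E₄, ψE₄ = E₃, ψE₅ = 0. -/
def psi (x : V) : V := ![x 1, -x 0, x 3, -x 2, 0]

/-- The coefficients of the connection 1-forms σⁱⱼ = (S i j)·e⁵ of the instanton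
A_{λ,μ,τ}: σ¹₂ = −σ²₁ = −σ³₄ = σ⁴₃ = −λe⁵, σ¹₃ = −σ³₁ = σ²₄ = −σ⁴₂ = −μe⁵,
σ¹₄ = −σ⁴₁ = −σ²₃ = σ³₂ = −τe⁵, all other σⁱⱼ = 0. -/
def S (lam mu tau : ℝ) : Fin 5 → Fin 5 → ℝ :=
  ![![0, -lam, -mu, -tau, 0],
    ![lam, 0, tau, -mu, 0],
    ![mu, -tau, 0, lam, 0],
    ![tau, mu, -lam, 0, 0],
    ![0, 0, 0, 0, 0]]

/-- The connection 1-forms of the instanton A_{λ,μ,τ}. -/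
def sigmaA (lam mu tau : ℝ) (i j : Fin 5) : V → ℝ := fun x => S lam mu tau i j * e 4 x

lemma nP0 (a b c : ℝ) (x y : V) :
    nablaP a b c x y 0 = -(x 4) * (a * y 1 + b * y 2 + c * y 3) := by
  simp [nablaP, nablaG, T3, w12, dEta, d1, e, br, ip, E, Fin.sum_univ_five,
    Pi.single_apply]
  ring

lemma nP1 (a b c : ℝ) (x y : V) :
    nablaP a b c x y 1 = -(x 4) * (-a * y 0 + b * y 3 - c * y 2) := by
  simp [nablaP, nablaG, T3, w12, dEta, d1, e, br, ip, E, Fin.sum_univ_five,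
    Pi.single_apply]
  ring

lemma nP2 (a b c : ℝ) (x y : V) :
    nablaP a b c x y 2 = -(x 4) * (-a * y 3 - b * y 0 + c * y 1) := by
  simp [nablaP, nablaG, T3, w12, dEta, d1, e, br, ip, E, Fin.sum_univ_five,
    Pi.single_apply]
  ring

lemma nP3 (a b c : ℝ) (x y : V) :
    nablaP a b c x y 3 = -(x 4) * (a * y 2 - b * y 1 - c * y 0) := by
  simp [nablaP, nablaG, T3, w12, dEta, d1, e, br, ip, E, Fin.sum_univ_five,
    Pi.single_apply]
  ring

lemma nP4 (a b c : ℝ) (x y : V) : nablaP a b c x y 4 = 0 := by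
  simp [nablaP, nablaG, T3, w12, dEta, d1, e, br, ip, E, Fin.sum_univ_five,
    Pi.single_apply]
  ring

/-- On 𝔥(2,1)_{a,b,c} with a²+b²+c² ≠ 0, the torsion connection ∇⁺
parallelizes the torsion 3-form T = η∧dη: for all X,Y,Z,W,
T(∇⁺_X Y, Z, W) + T(Y, ∇⁺_X Z, W) + T(Y, Z, ∇⁺_X W) = 0, i.e. ∇⁺T = 0. -/
theorem torsion_parallel (a b c : ℝ) (h : a ^ 2 + b ^ 2 + c ^ 2 ≠ 0) :
    ∀ X Y Z W : V,
      T3 a b c (nablaP a b c X Y) Z W + T3 a b c Y (nablaP a b c X Z) W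
        + T3 a b c Y Z (nablaP a b c X W) = 0 := by
  intro X Y Z W
  simp only [T3, w12, dEta, d1, e, br, nP0, nP1, nP2, nP3, nP4, reduceIte]
  ring
end
end

section
/- Let (a,b,c) ∈ ℝ³ with a²+b²+c² ≠ 0 and λ,μ,τ ∈ ℝ. On 𝔥(2,1)_{a,b,c}, the connection A_{λ,μ,τ} with connection forms σ¹₂ = −σ²₁ = −σ³₄ = σ⁴₃ = −λe⁵, σ¹₃ = −σ³₁ = σ²₄ = −σ⁴₂ = −μe⁵, σ¹₄ = −σ⁴₁ = −σ²₃ = σ³₂ = −τe⁵ and all other σⁱⱼ = 0 has curvature 2-forms Ω¹₂ = −Ω²₁ = −Ω³₄ = Ω⁴₃ = −λ·de⁵, Ω¹₃ = −Ω³₁ = Ω²₄ = −Ω⁴₂ = −μ·de⁵, Ω¹₄ = −Ω⁴₁ = −Ω²₃ = Ω³₂ = −τ·de⁵, all other Ωⁱⱼ = 0, and these curvature forms satisfy the SU(2)-instanton conditions: Ωⁱⱼ(ψX,ψY) = Ωⁱⱼ(X,Y) for all X,Y and Σ_{k=1}^{5} Ωⁱⱼ(E_k, ψE_k) = 0, for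 all i,j. -/
noncomputable section
open Real

/-- the curvature 2-forms of the connection A_{λ,μ,τ} on 𝔥(2,1)_{a,b,c}
are Ωⁱⱼ = (S i j)·de⁵ — that is, Ω¹₂ = −Ω²₁ = −Ω³₄ = Ω⁴₃ = −λ·de⁵,
Ω¹₃ = −Ω³₁ = Ω²₄ = −Ω⁴₂ = −μ·de⁵, Ω¹₄ = −Ω⁴₁ = −Ω²₃ = Ω³₂ = −τ·de⁵, all other
Ωⁱⱼ = 0 — and they satisfy the SU(2)-instanton conditions. -/
theorem instanton_curvature (a b c lam mu tau : ℝ) (h : a ^ 2 + b ^ 2 + c ^ 2 ≠ 0) :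
    -- the curvature 2-forms
    (∀ i j : Fin 5, ∀ x y : V,
      curv a b c (sigmaA lam mu tau) i j x y = S lam mu tau i j * dEta a b c x y)
    -- SU(2)-instanton condition: Ωⁱⱼ(ψX,ψY) = Ωⁱⱼ(X,Y)
    ∧ (∀ i j : Fin 5, ∀ x y : V,
        curv a b c (sigmaA lam mu tau) i j (psi x) (psi y)
          = curv a b c (sigmaA lam mu tau) i j x y)
    -- SU(2)-instanton condition: Σ_k Ωⁱⱼ(E_k, ψE_k) = 0
    ∧ (∀ i j : Fin 5,
        (∑ k, curv a b c (sigmaA lam mu tau) i j (E k) (psi (E k))) = 0) := by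
  have key : ∀ i j : Fin 5, ∀ x y : V,
      curv a b c (sigmaA lam mu tau) i j x y = S lam mu tau i j * dEta a b c x y := by
    intro i j x y
    simp only [curv, sigmaA, dEta, d1, e, Fin.sum_univ_five]
    ring
  refine ⟨key, ?_, ?_⟩
  · intro i j x y
    rw [key, key]
    have : dEta a b c (psi x) (psi y) = dEta a b c x y := by
      simp [dEta, d1, br, e, psi]
      ring
    rw [this]
  · intro i j
    simp only [key, Fin.sum_univ_five]
    simp [dEta, d1, br, e, psi, E, Pi.single_apply]
end
end

section
/- Let (a,b,c) ∈ ℝ³ with a²+b²+c² ≠ 0. On 𝔥(2,1)_{a,b,c} with the orthonormal metric and torsion 3-form T = η∧dη, the curvature 2-forms of the torsion connection ∇⁺ are Ω¹₂ = −Ω³₄ = −a·de⁵, Ω¹₃ = Ω²₄ = −b·de⁵, Ω¹₄ = −Ω²₃ = −c·de⁵ (with Ωⱼᵢ = −Ωⁱⱼ), and all curvature forms Ωⁱ₅ vanish. -/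
noncomputable section
open Real

set_option maxHeartbeats 4000000 in
lemma conn1_nablaP_eq (a b c : ℝ) (i j : Fin 5) (x : V) :
    conn1 (nablaP a b c) i j x = S a b c i j * x 4 := by
  fin_cases i <;> fin_cases j <;>
    simp [conn1, nablaP, nablaG, ip, T3, w12, dEta, d1, br, e, E, S,
      Fin.sum_univ_five, Pi.single_apply, Matrix.vecHead, Matrix.vecTail] <;> ring

lemma S_antisymm (a b c : ℝ) (i j : Fin 5) : S a b c j i = -S a b c i j := by
  fin_cases i <;> fin_cases j <;> norm_num [S, Matrix.vecHead, Matrix.vecTail]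

lemma curv_nablaP_eq (a b c : ℝ) (i j : Fin 5) (x y : V) :
    curv a b c (conn1 (nablaP a b c)) i j x y = S a b c i j * dEta a b c x y := by
  simp only [curv, d1, conn1_nablaP_eq, dEta, e, Fin.sum_univ_five]
  ring

/-- the curvature 2-forms of the torsion connection ∇⁺ on 𝔥(2,1)_{a,b,c}
are Ω¹₂ = −Ω³₄ = −a·de⁵, Ω¹₃ = Ω²₄ = −b·de⁵, Ω¹₄ = −Ω²₃ = −c·de⁵ (with Ωⱼᵢ = −Ωⁱⱼ),
and all the curvature forms Ωⁱ₅ vanish. -/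
theorem torsion_connection_curvature (a b c : ℝ) (h : a ^ 2 + b ^ 2 + c ^ 2 ≠ 0) :
    (∀ x y : V, curv a b c (conn1 (nablaP a b c)) 0 1 x y = -a * dEta a b c x y)
    ∧ (∀ x y : V, curv a b c (conn1 (nablaP a b c)) 2 3 x y = a * dEta a b c x y)
    ∧ (∀ x y : V, curv a b c (conn1 (nablaP a b c)) 0 2 x y = -b * dEta a b c x y)
    ∧ (∀ x y : V, curv a b c (conn1 (nablaP a b c)) 1 3 x y = -b * dEta a b c x y)
    ∧ (∀ x y : V, curv a b c (conn1 (nablaP a b c)) 0 3 x y = -c * dEta a b c x y)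
    ∧ (∀ x y : V, curv a b c (conn1 (nablaP a b c)) 1 2 x y = c * dEta a b c x y)
    ∧ (∀ i j : Fin 5, ∀ x y : V,
        curv a b c (conn1 (nablaP a b c)) j i x y
          = -curv a b c (conn1 (nablaP a b c)) i j x y)
    ∧ (∀ i : Fin 5, ∀ x y : V, curv a b c (conn1 (nablaP a b c)) i 4 x y = 0) := by
  refine ⟨fun x y => ?_, fun x y => ?_, fun x y => ?_, fun x y => ?_, fun x y => ?_,
    fun x y => ?_, fun i j x y => ?_, fun i x y => ?_⟩
  · rw [curv_nablaP_eq]; norm_num [S, Matrix.vecHead, Matrix.vecTail]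
  · rw [curv_nablaP_eq]; simp [S]
  · rw [curv_nablaP_eq]; simp [S]
  · rw [curv_nablaP_eq]; simp [S]
  · rw [curv_nablaP_eq]; simp [S]
  · rw [curv_nablaP_eq]; simp [S]
  · rw [curv_nablaP_eq, curv_nablaP_eq, S_antisymm]; ring
  · rw [curv_nablaP_eq]
    have : S a b c i (4 : Fin 5) = 0 := by fin_cases i <;> rfl
    rw [this]; ring
end
end

section
/- Let (a,b,c) ∈ ℝ³ with a²+b²+c² ≠ 0. On 𝔥(2,1)_{a,b,c}, the curvature 2-forms of the torsion connection ∇⁺ satisfy the SU(2)-instanton conditions (Ωⁱⱼ(ψX,ψY) = Ωⁱⱼ(X,Y) for all X,Y, and Σ_{k=1}^{5} Ωⁱⱼ(E_k,ψE_k) = 0, for all i,j), and the first Pontrjagin form of ∇⁺ is p₁(∇⁺) = −((a²+b²+c²)²/(2π²)) e¹∧e²∧e³∧e⁴. -/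
noncomputable section
open Real

section
variable (a b c : ℝ)

lemma ip_E (z : V) (i : Fin 5) : ip z (E i) = z i := by
  fin_cases i <;> simp [ip, E, Fin.sum_univ_five, Pi.single_apply]

lemma ip_br (u v w : V) : ip (br a b c u v) w = br a b c u v 4 * w 4 := by
  simp [ip, br, Fin.sum_univ_five]

lemma conn1_eq (i j : Fin 5) (x : V) :
    conn1 (nablaP a b c) i j x = S a b c i j * x 4 := by
  simp only [conn1, ip_E, nablaP, nablaG, T3, w12, dEta, d1, e, ip_br, ip_E]
  fin_cases i <;> fin_cases j <;>
    simp [br, E, S, Pi.single_apply, Matrix.vecHead, Matrix.vecTail] <;> ring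

lemma curv_eq (i j : Fin 5) (x y : V) :
    curv a b c (conn1 (nablaP a b c)) i j x y
      = -(S a b c i j) * br a b c x y 4 := by
  simp only [curv, d1, conn1_eq, Fin.sum_univ_five]
  ring

lemma brbr (x y z w : V) :
    br a b c x y 4 * br a b c z w 4 - br a b c x z 4 * br a b c y w 4
      + br a b c x w 4 * br a b c y z 4 + br a b c y z 4 * br a b c x w 4
      - br a b c y w 4 * br a b c x z 4 + br a b c z w 4 * br a b c x y 4
      = -2 * (a ^ 2 + b ^ 2 + c ^ 2) * e1234 x y z w := by
  simp only [br, e1234, w22, w11, e]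
  norm_num
  ring

end

set_option maxHeartbeats 1600000 in
set_option maxRecDepth 8000 in
/-- on 𝔥(2,1)_{a,b,c} the curvature 2-forms of the torsion connection ∇⁺
satisfy the SU(2)-instanton conditions, and the first Pontrjagin form of ∇⁺ is
p₁(∇⁺) = −((a²+b²+c²)²/(2π²)) e¹∧e²∧e³∧e⁴. -/
theorem torsion_connection_instanton (a b c : ℝ) (h : a ^ 2 + b ^ 2 + c ^ 2 ≠ 0) :
    -- SU(2)-instanton condition: Ωⁱⱼ(ψX,ψY) = Ωⁱⱼ(X,Y)
    (∀ i j : Fin 5, ∀ x y : V,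
      curv a b c (conn1 (nablaP a b c)) i j (psi x) (psi y)
        = curv a b c (conn1 (nablaP a b c)) i j x y)
    -- SU(2)-instanton condition: Σ_k Ωⁱⱼ(E_k, ψE_k) = 0
    ∧ (∀ i j : Fin 5,
        (∑ k, curv a b c (conn1 (nablaP a b c)) i j (E k) (psi (E k))) = 0)
    -- p₁(∇⁺) = −((a²+b²+c²)²/(2π²)) e¹∧e²∧e³∧e⁴
    ∧ (∀ x y z w : V,
        pont (curv a b c (conn1 (nablaP a b c))) x y z w =
          -((a ^ 2 + b ^ 2 + c ^ 2) ^ 2 / (2 * π ^ 2)) * e1234 x y z w) := by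
  refine ⟨?_, ?_, ?_⟩
  · intro i j x y
    rw [curv_eq, curv_eq]
    have hb : br a b c (psi x) (psi y) 4 = br a b c x y 4 := by
      simp [br, psi]; ring
    rw [hb]
  · intro i j
    simp only [Fin.sum_univ_five, curv_eq]
    simp [br, psi, E, Pi.single_apply]
  · intro x y z w
    have key : (∑ i, ∑ j, if i < j then
        w22 (curv a b c (conn1 (nablaP a b c)) i j)
          (curv a b c (conn1 (nablaP a b c)) i j) x y z w else 0)
        = -4 * (a ^ 2 + b ^ 2 + c ^ 2) ^ 2 * e1234 x y z w := by
      simp only [Fin.sum_univ_five]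
      simp only [Fin.reduceLT, reduceIte]
      simp only [w22, curv_eq]
      simp [S, Matrix.vecHead, Matrix.vecTail]
      linear_combination (2 * (a ^ 2 + b ^ 2 + c ^ 2)) * brbr a b c x y z w
    have hπ : (π : ℝ) ≠ 0 := Real.pi_ne_zero
    rw [pont, key]
    field_simp
    ring
end
end

section
/- Let (a,b,c) ∈ ℝ³ with a²+b²+c² ≠ 0. On 𝔥(2,1)_{a,b,c}, the torsion 3-form T = η∧dη satisfies dT = −2(a²+b²+c²) e¹∧e²∧e³∧e⁴. Moreover, if (λ,μ,τ) ≠ (0,0,0) satisfies λ²+μ²+τ² < a²+b²+c², then with α' = 2(a²+b²+c²−λ²−μ²−τ²)^{−1} > 0 one has the anomaly cancellation identity dT = 2π² α' ( p₁(∇⁺) − p₁(A_{λ,μ,τ}) ). -/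
noncomputable section
open Real

/-- Auxiliary: the bracket coefficient 2-form. -/
def q (a b c : ℝ) : V → V → ℝ := fun x y => br a b c x y 4

lemma curvA (a b c l m t : ℝ) (i j : Fin 5) :
    curv a b c (sigmaA l m t) i j = fun x y => -(S l m t i j) * q a b c x y := by
  funext x y
  simp only [curv, sigmaA, d1, e, q, Fin.sum_univ_five]
  ring

lemma w22_smul (k k' : ℝ) (β : V → V → ℝ) (x y z w : V) :
    w22 (fun x y => k * β x y) (fun x y => k' * β x y) x y z w
      = (k * k') * w22 β β x y z w := by
  simp only [w22]; ring

lemma qq (a b c : ℝ) (x y z w : V) :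
    w22 (q a b c) (q a b c) x y z w = -2*(a^2+b^2+c^2) * e1234 x y z w := by
  simp only [q, w22, br, e1234, w11, e]
  norm_num
  ring

lemma pontA_sum (a b c l m t : ℝ) (x y z w : V) :
    (∑ i, ∑ j, if i < j then
        w22 (curv a b c (sigmaA l m t) i j) (curv a b c (sigmaA l m t) i j) x y z w else 0)
    = 2*(l^2+m^2+t^2) * w22 (q a b c) (q a b c) x y z w := by
  simp only [curvA, w22_smul, Fin.sum_univ_five, S, Matrix.cons_val_zero,
    Matrix.cons_val_one, Matrix.head_cons, Matrix.cons_val_two, Matrix.tail_cons,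
    Matrix.cons_val_three, Matrix.cons_val_four, Matrix.head_fin_const, Fin.isValue,
    Fin.reduceLT, Fin.reduceEq, reduceIte]
  ring

lemma ipE (v : V) (i : Fin 5) : ip v (E i) = v i := by
  simp [ip, E, Pi.single_apply, eq_comm]

lemma Eapp (i k : Fin 5) : E i k = if k = i then 1 else 0 := Pi.single_apply i 1 k

lemma connP (a b c : ℝ) : conn1 (nablaP a b c) = sigmaA a b c := by
  funext i j x
  fin_cases i <;> fin_cases j <;>
  · simp only [conn1, ipE, nablaP, nablaG, T3, w12, dEta, d1, e, ip, Fin.sum_univ_five,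
      br, Eapp, Fin.isValue, Fin.zero_eta, Fin.mk_one, Fin.reduceFinMk, Fin.reduceEq,
      reduceIte, sigmaA, S, Matrix.cons_val_zero, Matrix.cons_val_one, Matrix.head_cons,
      Matrix.cons_val_two, Matrix.tail_cons, Matrix.cons_val_three, Matrix.cons_val_four,
      Matrix.head_fin_const, mul_zero, mul_one, zero_mul, one_mul]
    ring

lemma dT (a b c : ℝ) (x y z w : V) :
    d3 a b c (T3 a b c) x y z w = -2 * (a ^ 2 + b ^ 2 + c ^ 2) * e1234 x y z w := by
  simp only [d3, T3, w12, dEta, d1, br, e, e1234, w22, w11, Fin.isValue, Fin.reduceEq,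
    reduceIte, mul_zero, zero_mul, mul_one, one_mul, neg_neg, neg_zero]
  ring

lemma pontA (a b c l m t : ℝ) (x y z w : V) :
    pont (curv a b c (sigmaA l m t)) x y z w
      = (1 / (8 * π ^ 2)) * (-4 * (l ^ 2 + m ^ 2 + t ^ 2) * (a ^ 2 + b ^ 2 + c ^ 2)
          * e1234 x y z w) := by
  rw [pont, pontA_sum, qq]; ring

/-- on 𝔥(2,1)_{a,b,c}, dT = −2(a²+b²+c²) e¹∧e²∧e³∧e⁴; moreover, if
(λ,μ,τ) ≠ (0,0,0) and λ²+μ²+τ² < a²+b²+c², then with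
α' = 2(a²+b²+c²−λ²−μ²−τ²)⁻¹ > 0 one has the anomaly cancellation identity
dT = 2π²α'(p₁(∇⁺) − p₁(A_{λ,μ,τ})). -/
theorem anomaly_cancellation_plus (a b c lam mu tau : ℝ)
    (h : a ^ 2 + b ^ 2 + c ^ 2 ≠ 0) :
    (∀ x y z w : V,
      d3 a b c (T3 a b c) x y z w = -2 * (a ^ 2 + b ^ 2 + c ^ 2) * e1234 x y z w)
    ∧ (¬(lam = 0 ∧ mu = 0 ∧ tau = 0) →
       lam ^ 2 + mu ^ 2 + tau ^ 2 < a ^ 2 + b ^ 2 + c ^ 2 →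
       0 < 2 * (a ^ 2 + b ^ 2 + c ^ 2 - (lam ^ 2 + mu ^ 2 + tau ^ 2))⁻¹
       ∧ ∀ x y z w : V,
           d3 a b c (T3 a b c) x y z w =
             2 * π ^ 2 * (2 * (a ^ 2 + b ^ 2 + c ^ 2 - (lam ^ 2 + mu ^ 2 + tau ^ 2))⁻¹)
               * (pont (curv a b c (conn1 (nablaP a b c))) x y z w
                   - pont (curv a b c (sigmaA lam mu tau)) x y z w)) := by
  
  refine ⟨fun x y z w => dT a b c x y z w, fun _ hlt => ?_⟩
  have hK : (0:ℝ) < a ^ 2 + b ^ 2 + c ^ 2 - (lam ^ 2 + mu ^ 2 + tau ^ 2) := by linarith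
  refine ⟨by positivity, fun x y z w => ?_⟩
  rw [dT, connP, pontA, pontA]
  have hπ : (π:ℝ) ≠ 0 := Real.pi_ne_zero
  field_simp
  ring
end
end

section
/- Let (a,b,c) ∈ ℝ³ with a²+b²+c² ≠ 0. On 𝔥(2,1)_{a,b,c}, the connection ∇⁻ defined by ⟨∇⁻_X Y, Z⟩ = ⟨∇_X Y, Z⟩ − ½T(X,Y,Z) has vanishing first Pontrjagin form: its curvature 2-forms satisfy Σ_{1≤i<j≤5} Ωⁱⱼ ∧ Ωⁱⱼ = 0. -/
noncomputable section
open Real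

/-- The connection ∇⁻: ⟨∇⁻_X Y, Z⟩ = ⟨∇_X Y, Z⟩ − ½T(X,Y,Z). -/
def nablaM (a b c : ℝ) (x y : V) : V := fun k =>
  nablaG a b c x y k - (1 / 2) * T3 a b c x y (E k)


/-- Explicit form of the connection 1-forms of ∇⁻. -/
def SM (a b c : ℝ) : Fin 5 → Fin 5 → V → ℝ :=
  ![![fun _ => 0, fun _ => 0, fun _ => 0, fun _ => 0, fun x => -a*x 1 - b*x 2 - c*x 3],
    ![fun _ => 0, fun _ => 0, fun _ => 0, fun _ => 0, fun x => a*x 0 + c*x 2 - b*x 3],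
    ![fun _ => 0, fun _ => 0, fun _ => 0, fun _ => 0, fun x => b*x 0 - c*x 1 + a*x 3],
    ![fun _ => 0, fun _ => 0, fun _ => 0, fun _ => 0, fun x => c*x 0 + b*x 1 - a*x 2],
    ![fun x => a*x 1 + b*x 2 + c*x 3, fun x => -a*x 0 - c*x 2 + b*x 3,
      fun x => -b*x 0 + c*x 1 - a*x 3, fun x => -c*x 0 - b*x 1 + a*x 2, fun _ => 0]]

lemma key (u v : V → ℝ) (x y z w : V) :
    w22 (fun x y => u x * v y - u y * v x) (fun x y => u x * v y - u y * v x) x y z w = 0 := by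
  simp only [w22]; ring

lemma w22zero (x y z w : V) : w22 (fun _ _ => 0) (fun _ _ => 0) x y z w = 0 := by
  simp [w22]

set_option maxHeartbeats 1000000 in
lemma conn_eq (a b c : ℝ) (i j : Fin 5) (x : V) :
    conn1 (nablaM a b c) i j x = SM a b c i j x := by
  fin_cases i <;> fin_cases j <;>
    simp [conn1, nablaM, nablaG, T3, w12, dEta, d1, br, ip, E, e, SM,
      Fin.sum_univ_five, Pi.single_apply, Fin.isValue] <;> ring

set_option maxHeartbeats 1000000 in
lemma curv4 (a b c : ℝ) (i : Fin 5) :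
    curv a b c (SM a b c) i 4 = fun _ _ => 0 := by
  funext x y
  fin_cases i <;>
    simp [curv, SM, d1, br, Fin.sum_univ_five, Matrix.vecHead, Matrix.vecTail] <;> ring

set_option maxHeartbeats 1000000 in
lemma curvlow (a b c : ℝ) (i j : Fin 5) (hi : i ≠ 4) (hj : j ≠ 4) :
    curv a b c (SM a b c) i j =
      fun x y => SM a b c i 4 x * SM a b c 4 j y - SM a b c i 4 y * SM a b c 4 j x := by
  funext x y
  fin_cases i <;> simp_all <;> fin_cases j <;> simp_all <;>
    simp [curv, SM, d1, br, Fin.sum_univ_five, Matrix.vecHead, Matrix.vecTail] <;> ring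

/-- on 𝔥(2,1)_{a,b,c}, the connection ∇⁻ has vanishing first
Pontrjagin form: Σ_{1≤i<j≤5} Ωⁱⱼ∧Ωⁱⱼ = 0. -/
theorem minus_connection_pontrjagin_vanishes (a b c : ℝ)
    (h : a ^ 2 + b ^ 2 + c ^ 2 ≠ 0) :
    ∀ x y z w : V,
      (∑ i, ∑ j, if i < j then
          w22 (curv a b c (conn1 (nablaM a b c)) i j)
            (curv a b c (conn1 (nablaM a b c)) i j) x y z w
        else 0) = 0 := by
  intro x y z w
  have hc : conn1 (nablaM a b c) = SM a b c :=
    funext fun i => funext fun j => funext fun x => conn_eq a b c i j x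
  rw [hc]
  have h4 : ∀ i : Fin 5,
      w22 (curv a b c (SM a b c) i 4) (curv a b c (SM a b c) i 4) x y z w = 0 := by
    intro i; rw [curv4]; exact w22zero x y z w
  have hl : ∀ i j : Fin 5, i ≠ 4 → j ≠ 4 →
      w22 (curv a b c (SM a b c) i j) (curv a b c (SM a b c) i j) x y z w = 0 := by
    intro i j hi hj; rw [curvlow a b c i j hi hj]; exact key _ _ x y z w
  simp only [Fin.sum_univ_five, Fin.isValue, Fin.reduceLT, reduceIte]
  rw [h4 0, h4 1, h4 2, h4 3,
    hl 0 1 (by decide) (by decide), hl 0 2 (by decide) (by decide),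
    hl 0 3 (by decide) (by decide), hl 1 2 (by decide) (by decide),
    hl 1 3 (by decide) (by decide), hl 2 3 (by decide) (by decide)]
  norm_num
end
end

section
/- Let E₁,…,E₅ be the standard orthonormal basis of ℝ⁵, ψ the endomorphism with ψE₁ = −E₂, ψE₂ = E₁, ψE₃ = −E₄, ψE₄ = E₃, ψE₅ = 0 (components ψ^s_n), and F the 2-form e¹∧e² + e³∧e⁴ (components F_{tr}). Let R : Fin 5 → Fin 5 → Fin 5 → Fin 5 → ℝ be a tensor, R_{mnij}, that is antisymmetric in (m,n) and in (i,j) and is an SU(2)-instanton in its first pair of indices, i.e. Σ_{s,t} ψ^s_k ψ^t_l R_{stij} = R_{klij} for all k,l,i,j and Σ_{k,l} R_{klij} F_{kl} = 0 for all i,j. Then for all m,n: (1/2) Σ_{s,t,r,i,j} [ R_{msij}R_{trij} + R_{mtij}R_{rsij} + R_{mrij}R_{stij} ] F_{tr} ψ^s_n = Σ_{s,t,r} R_{mstr} R_{nstr}. -/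
noncomputable section

/-- The matrix entries ψ^s_n of the endomorphism ψ of ℝ⁵ with ψE₁ = −E₂, ψE₂ = E₁,
ψE₃ = −E₄, ψE₄ = E₃, ψE₅ = 0 (so ψE_n = Σ_s ψ^s_n E_s, 0-indexed). -/
def psiM : Fin 5 → Fin 5 → ℝ :=
  ![![0, 1, 0, 0, 0],
    ![-1, 0, 0, 0, 0],
    ![0, 0, 0, 1, 0],
    ![0, 0, -1, 0, 0],
    ![0, 0, 0, 0, 0]]

/-- The components F_{tr} of the 2-form F = e¹∧e² + e³∧e⁴ on ℝ⁵ (0-indexed):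
F_{12} = F_{34} = 1 = −F_{21} = −F_{43}, all other components zero. -/
def Fc : Fin 5 → Fin 5 → ℝ :=
  ![![0, 1, 0, 0, 0],
    ![-1, 0, 0, 0, 0],
    ![0, 0, 0, 1, 0],
    ![0, 0, -1, 0, 0],
    ![0, 0, 0, 0, 0]]

lemma hFpsi : ∀ a b : Fin 5, Fc a b = -psiM b a := by
  intro a b; fin_cases a <;> fin_cases b <;> norm_num [Fc, psiM]

lemma hFa : ∀ a b : Fin 5, Fc a b = -Fc b a := by
  intro a b; fin_cases a <;> fin_cases b <;> norm_num [Fc]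

lemma perm1 (f : Fin 5 → Fin 5 → Fin 5 → Fin 5 → ℝ) :
    (∑ t, ∑ r, ∑ i, ∑ j, f t r i j) = ∑ i, ∑ j, ∑ t, ∑ r, f t r i j := by
  conv_lhs => enter [2, t]; rw [Finset.sum_comm]       -- t i r j
  rw [Finset.sum_comm]                                 -- i t r j
  conv_lhs => enter [2, i, 2, t]; rw [Finset.sum_comm] -- i t j r
  conv_lhs => enter [2, i]; rw [Finset.sum_comm]       -- i j t r

lemma perm2 (f : Fin 5 → Fin 5 → Fin 5 → Fin 5 → Fin 5 → ℝ) :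
    (∑ s, ∑ t, ∑ r, ∑ i, ∑ j, f s t r i j)
      = ∑ t, ∑ i, ∑ j, ∑ r, ∑ s, f s t r i j := by
  rw [Finset.sum_comm]                                       -- t s r i j
  conv_lhs => enter [2, t]; rw [Finset.sum_comm]             -- t r s i j
  conv_lhs => enter [2, t, 2, r]; rw [Finset.sum_comm]       -- t r i s j
  conv_lhs => enter [2, t, 2, r, 2, i]; rw [Finset.sum_comm] -- t r i j s
  conv_lhs => enter [2, t]; rw [Finset.sum_comm]             -- t i r j s
  conv_lhs => enter [2, t, 2, i]; rw [Finset.sum_comm]       -- t i j r s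


/-- if R_{mnij} is antisymmetric in (m,n) and in (i,j) and is an
SU(2)-instanton in its first pair of indices, then the quadratic curvature identity
(1/2)Σ[R_{msij}R_{trij} + R_{mtij}R_{rsij} + R_{mrij}R_{stij}]F_{tr}ψ^s_n
= R_{mstr}R_{nstr} holds for all m,n. -/
theorem quadratic_identity_for_instantons (R : Fin 5 → Fin 5 → Fin 5 → Fin 5 → ℝ)
    (hskew₁ : ∀ m n i j, R m n i j = -R n m i j)
    (hskew₂ : ∀ m n i j, R m n i j = -R m n j i)
    (hinst₁ : ∀ k l i j, (∑ s, ∑ t, psiM s k * psiM t l * R s t i j) = R k l i j)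
    (hinst₂ : ∀ i j, (∑ k, ∑ l, R k l i j * Fc k l) = 0) :
    ∀ m n : Fin 5,
      (1 / 2) * (∑ s, ∑ t, ∑ r, ∑ i, ∑ j,
          (R m s i j * R t r i j + R m t i j * R r s i j + R m r i j * R s t i j)
            * Fc t r * psiM s n)
        = ∑ s, ∑ t, ∑ r, R m s t r * R n s t r := by
  intro m n
  -- key contraction lemma: contracting R with F and ψ via the instanton condition
  have hK : ∀ (t i j : Fin 5), (∑ r, ∑ s, R r s i j * Fc t r * psiM s n) = -R t n i j := by
    intro t i j
    have h := hinst₁ t n i j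
    calc (∑ r, ∑ s, R r s i j * Fc t r * psiM s n)
        = ∑ r, ∑ s, -(psiM r t * psiM s n * R r s i j) := by
          refine Finset.sum_congr rfl fun r _ => Finset.sum_congr rfl fun s _ => ?_
          rw [hFpsi t r]; ring
      _ = -(∑ r, ∑ s, psiM r t * psiM s n * R r s i j) := by
          simp [Finset.sum_neg_distrib]
      _ = -R t n i j := by rw [h]
  -- split the sum into three pieces
  have hsplit : (∑ s, ∑ t, ∑ r, ∑ i, ∑ j,
      (R m s i j * R t r i j + R m t i j * R r s i j + R m r i j * R s t i j)
        * Fc t r * psiM s n)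
      = (∑ s, ∑ t, ∑ r, ∑ i, ∑ j, R m s i j * R t r i j * Fc t r * psiM s n)
      + (∑ s, ∑ t, ∑ r, ∑ i, ∑ j, R m t i j * R r s i j * Fc t r * psiM s n)
      + (∑ s, ∑ t, ∑ r, ∑ i, ∑ j, R m r i j * R s t i j * Fc t r * psiM s n) := by
    simp only [add_mul, Finset.sum_add_distrib]
  -- first piece vanishes by hinst₂
  have h1 : (∑ s, ∑ t, ∑ r, ∑ i, ∑ j, R m s i j * R t r i j * Fc t r * psiM s n) = 0 := by
    refine Finset.sum_eq_zero fun s _ => ?_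
    rw [perm1 (fun t r i j => R m s i j * R t r i j * Fc t r * psiM s n)]
    refine Finset.sum_eq_zero fun i _ => Finset.sum_eq_zero fun j _ => ?_
    calc (∑ t, ∑ r, R m s i j * R t r i j * Fc t r * psiM s n)
        = R m s i j * psiM s n * ∑ t, ∑ r, R t r i j * Fc t r := by
          rw [Finset.mul_sum]
          refine Finset.sum_congr rfl fun t _ => ?_
          rw [Finset.mul_sum]
          exact Finset.sum_congr rfl fun r _ => by ring
      _ = 0 := by rw [hinst₂ i j, mul_zero]
  -- third piece equals second piece (swap t ↔ r and use antisymmetries)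
  have h3 : (∑ s, ∑ t, ∑ r, ∑ i, ∑ j, R m r i j * R s t i j * Fc t r * psiM s n)
      = ∑ s, ∑ t, ∑ r, ∑ i, ∑ j, R m t i j * R r s i j * Fc t r * psiM s n := by
    refine Finset.sum_congr rfl fun s _ => ?_
    rw [Finset.sum_comm]
    refine Finset.sum_congr rfl fun t _ => Finset.sum_congr rfl fun r _ =>
      Finset.sum_congr rfl fun i _ => Finset.sum_congr rfl fun j _ => ?_
    rw [hskew₁ s r i j, hFa r t]; ring
  -- second piece equals the RHS
  have h2 : (∑ s, ∑ t, ∑ r, ∑ i, ∑ j, R m t i j * R r s i j * Fc t r * psiM s n)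
      = ∑ s, ∑ t, ∑ r, R m s t r * R n s t r := by
    rw [perm2 (fun s t r i j => R m t i j * R r s i j * Fc t r * psiM s n)]
    refine Finset.sum_congr rfl fun t _ => Finset.sum_congr rfl fun i _ =>
      Finset.sum_congr rfl fun j _ => ?_
    calc (∑ r, ∑ s, R m t i j * R r s i j * Fc t r * psiM s n)
        = R m t i j * ∑ r, ∑ s, R r s i j * Fc t r * psiM s n := by
          rw [Finset.mul_sum]
          refine Finset.sum_congr rfl fun r _ => ?_
          rw [Finset.mul_sum]
          exact Finset.sum_congr rfl fun s _ => by ring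
      _ = R m t i j * -R t n i j := by rw [hK t i j]
      _ = R m t i j * R n t i j := by rw [hskew₁ n t i j]
  rw [hsplit, h1, h3, h2]
  ring
end
end
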